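/- Let $k$ be a field, $V$ a finite-dimensional $k$-vector space, $p \geq 1$, and $x \in \mathrm{End}_k(V)$ with $x^p = 0$. Then $V$ is free as a module over $k[u]/(u^p)$ (with $u$ acting by $x$) if and only if $\ker(x) = \mathrm{im}(x^{p-1})$. -/

import Mathlib

/-- Multiplication by `u` on the free module `(k[u]/(u^p))^d`, written in the basis
`u^0, …, u^{p-1}` of each of the `d` copies of `k[u]/(u^p)`: the coordinate shift operator. -/
noncomputable def shiftOp (k : Type*) [Field k] (p d : ℕ) :
    Module.End k (Fin d → Fin p → k) where
  toFun v := fun i j => if h : (j : ℕ) + 1 < p then v i ⟨(j : ℕ) + 1, h⟩ else 0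
  map_add' u v := by funext i j; dsimp; split <;> simp
  map_smul' c v := by funext i j; dsimp; split <;> simp

/-- `V` is free as a module over `k[u]/(u^p)` with `u` acting by the endomorphism `x`:
there is a `k`-linear isomorphism of `V` with `(k[u]/(u^p))^d` carrying `x` to
multiplication by `u`. -/
def IsFreeTruncated {k V : Type*} [Field k] [AddCommGroup V] [Module k V]
    (p : ℕ) (x : Module.End k V) : Prop :=
  ∃ (d : ℕ) (e : V ≃ₗ[k] (Fin d → Fin p → k)), ∀ v : V, e (x v) = shiftOp k p d (e v)

lemma shiftOp_apply (k : Type*) [Field k] (p d : ℕ) (c : Fin d → Fin p → k) (i : Fin d)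
    (j : Fin p) :
    shiftOp k p d c i j = if h : (j : ℕ) + 1 < p then c i ⟨(j : ℕ) + 1, h⟩ else 0 := rfl

lemma shiftOp_pow_apply (k : Type*) [Field k] (p d m : ℕ) (c : Fin d → Fin p → k) (i : Fin d)
    (j : Fin p) :
    ((shiftOp k p d ^ m) c) i j = if h : (j : ℕ) + m < p then c i ⟨(j : ℕ) + m, h⟩ else 0 := by
  induction m generalizing c with
  | zero => simp
  | succ m ih =>
    rw [pow_succ, Module.End.mul_apply, ih]
    rcases lt_or_ge ((j : ℕ) + (m + 1)) p with h | h
    · rw [dif_pos (by omega : (j : ℕ) + m < p), shiftOp_apply]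
      simp only [Fin.val_mk]
      rw [dif_pos (by omega : (j : ℕ) + m + 1 < p), dif_pos h]
      rfl
    · rcases lt_or_ge ((j : ℕ) + m) p with h2 | h2
      · rw [dif_pos h2, dif_neg (by omega), shiftOp_apply]
        simp only [Fin.val_mk]
        rw [dif_neg (by omega)]
      · rw [dif_neg (by omega : ¬((j : ℕ) + m < p)), dif_neg (by omega)]

/-- Kernel of the shift equals the range of its `(p-1)`-st power. -/
lemma shiftOp_ker_eq_range (k : Type*) [Field k] (p d : ℕ) (hp : 1 ≤ p) :
    LinearMap.ker (shiftOp k p d) = LinearMap.range (shiftOp k p d ^ (p - 1)) := by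
  ext c
  simp only [LinearMap.mem_ker, LinearMap.mem_range]
  constructor
  · intro h
    refine ⟨fun i _ => c i ⟨0, by omega⟩, ?_⟩
    funext i j
    rw [shiftOp_pow_apply]
    rcases lt_or_ge ((j : ℕ) + (p - 1)) p with hj | hj
    · rw [dif_pos hj]
      have : j = ⟨0, by omega⟩ := by apply Fin.ext; simp; omega
      rw [this]
    · rw [dif_neg (by omega)]
      have hj1 : (j : ℕ) - 1 + 1 < p := by omega
      have h2 := congrFun (congrFun h i) ⟨(j : ℕ) - 1, by omega⟩
      rw [shiftOp_apply, dif_pos hj1] at h2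
      simp only [Pi.zero_apply] at h2
      rw [← h2]
      congr 1
      apply Fin.ext
      simp
      omega
  · rintro ⟨b, rfl⟩
    funext i j
    rw [shiftOp_apply]
    split
    · rw [shiftOp_pow_apply, dif_neg (by simp only [Fin.val_mk]; omega)]
      simp
    · simp

theorem isFreeTruncated_iff_ker_eq_range {k V : Type*} [Field k]
    [AddCommGroup V] [Module k V] [FiniteDimensional k V]
    (p : ℕ) (hp : 1 ≤ p) (x : Module.End k V) (hx : x ^ p = 0) :
    IsFreeTruncated p x ↔ LinearMap.ker x = LinearMap.range (x ^ (p - 1)) := by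
  constructor
  · -- forward direction: transport along `e`
    rintro ⟨d, e, he⟩
    have hpow : ∀ (m : ℕ) (v : V), e ((x ^ m) v) = ((shiftOp k p d) ^ m) (e v) := by
      intro m
      induction m with
      | zero => intro v; simp
      | succ m ih =>
        intro v
        rw [pow_succ, Module.End.mul_apply, ih, he, ← Module.End.mul_apply, ← pow_succ]
    ext v
    simp only [LinearMap.mem_ker, LinearMap.mem_range]
    constructor
    · intro hv
      have h1 : shiftOp k p d (e v) = 0 := by rw [← he, hv, map_zero]
      have h2 : e v ∈ LinearMap.range (shiftOp k p d ^ (p - 1)) := by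
        rw [← shiftOp_ker_eq_range k p d hp]; exact h1
      obtain ⟨c, hc⟩ := h2
      refine ⟨e.symm c, ?_⟩
      apply e.injective
      rw [hpow, e.apply_symm_apply, hc]
    · rintro ⟨w, rfl⟩
      apply e.injective
      rw [he, map_zero, hpow]
      have hmem : (shiftOp k p d ^ (p - 1)) (e w) ∈ LinearMap.ker (shiftOp k p d) := by
        rw [shiftOp_ker_eq_range k p d hp]
        exact ⟨e w, rfl⟩
      exact hmem
  · -- backward direction
    intro hker
    obtain ⟨q, rfl⟩ : ∃ q, p = q + 1 := ⟨p - 1, by omega⟩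
    simp only [Nat.add_sub_cancel] at hker
    set d := Module.finrank k (LinearMap.ker x) with hd
    let b : Module.Basis (Fin d) k (LinearMap.ker x) := Module.finBasis k (LinearMap.ker x)
    have hbv : ∀ i, ((b i : V)) ∈ LinearMap.range (x ^ q) := by
      intro i; rw [← hker]; exact (b i).2
    choose v hv using fun i => hbv i
    -- Step A: kernels of powers
    have hkerpow : ∀ j, j ≤ q + 1 → LinearMap.ker (x ^ j) = LinearMap.range (x ^ (q + 1 - j)) := by
      intro j
      induction j with
      | zero =>
        intro _
        rw [Nat.sub_zero, hx, LinearMap.range_zero, pow_zero, Module.End.one_eq_id,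
          LinearMap.ker_id]
      | succ j ih =>
        intro hj
        have hjq : j ≤ q + 1 := by omega
        apply le_antisymm
        · intro w hw
          have hxw : x w ∈ LinearMap.ker (x ^ j) := by
            rw [LinearMap.mem_ker, ← Module.End.mul_apply, ← pow_succ]
            exact hw
          rw [ih hjq] at hxw
          obtain ⟨u, hu⟩ := hxw
          have hsplit : q + 1 - j = (q + 1 - (j + 1)) + 1 := by omega
          rw [hsplit, pow_succ', Module.End.mul_apply] at hu
          have hdiff : w - (x ^ (q + 1 - (j + 1))) u ∈ LinearMap.ker x := by
            rw [LinearMap.mem_ker, map_sub, hu, sub_self]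
          rw [hker] at hdiff
          have hle : LinearMap.range (x ^ q) ≤ LinearMap.range (x ^ (q + 1 - (j + 1))) := by
            have : x ^ q = x ^ (q + 1 - (j + 1)) * x ^ (q - (q + 1 - (j + 1))) := by
              rw [← pow_add]; congr 1; omega
            rw [this]
            rintro _ ⟨a, rfl⟩
            exact ⟨(x ^ (q - (q + 1 - (j + 1)))) a, rfl⟩
          have h1 : w - (x ^ (q + 1 - (j + 1))) u ∈ LinearMap.range (x ^ (q + 1 - (j + 1))) :=
            hle hdiff
          have h2 : (x ^ (q + 1 - (j + 1))) u ∈ LinearMap.range (x ^ (q + 1 - (j + 1))) :=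
            ⟨u, rfl⟩
          simpa using add_mem h1 h2
        · rintro _ ⟨w, rfl⟩
          rw [LinearMap.mem_ker, ← Module.End.mul_apply, ← pow_add]
          have : j + 1 + (q + 1 - (j + 1)) = q + 1 := by omega
          rw [this, hx]
          rfl
    -- Step B: dimensions
    have hdim : ∀ j, j ≤ q + 1 → Module.finrank k (LinearMap.ker (x ^ j)) = j * d := by
      intro j
      induction j with
      | zero =>
        intro _
        simp [pow_zero, Module.End.one_eq_id, LinearMap.ker_id]
      | succ j ih =>
        intro hj
        have hjq : j ≤ q + 1 := by omega
        set K := LinearMap.ker (x ^ (j + 1)) with hK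
        let f : K →ₗ[k] V := x.domRestrict K
        have hrange : LinearMap.range f = LinearMap.ker (x ^ j) := by
          rw [LinearMap.range_domRestrict]
          have h1 : K = LinearMap.range (x ^ (q + 1 - (j + 1))) := hkerpow (j + 1) hj
          rw [h1, ← LinearMap.range_comp]
          have : x ∘ₗ (x ^ (q + 1 - (j + 1))) = x ^ (q + 1 - j) := by
            have : q + 1 - j = (q + 1 - (j + 1)) + 1 := by omega
            rw [this, pow_succ']
            rfl
          rw [this, ← hkerpow j hjq]
        have hkerf : LinearMap.ker f = (LinearMap.ker x).comap K.subtype :=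
          LinearMap.ker_domRestrict K x
        have hkerle : LinearMap.ker x ≤ K := by
          intro w hw
          rw [hK, LinearMap.mem_ker, pow_succ, Module.End.mul_apply,
            LinearMap.mem_ker.mp hw, map_zero]
        have hkerfrank : Module.finrank k (LinearMap.ker f) = d := by
          rw [hkerf]
          exact (Submodule.comapSubtypeEquivOfLe hkerle).finrank_eq
        have := LinearMap.finrank_range_add_finrank_ker f
        rw [hrange, hkerfrank, ih hjq] at this
        have hKr : Module.finrank k K = j * d + d := by omega
        rw [hKr]; ring
    have hn : Module.finrank k V = (q + 1) * d := by
      have h1 : LinearMap.ker (x ^ (q + 1)) = ⊤ := by rw [hx]; exact LinearMap.ker_zero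
      have h2 := hdim (q + 1) le_rfl
      rw [h1, finrank_top] at h2
      exact h2
    -- the comparison map Φ
    let Φ : (Fin d → Fin (q + 1) → k) →ₗ[k] V :=
      { toFun := fun c => ∑ i : Fin d, ∑ j : Fin (q + 1), c i j • (x ^ (q - (j : ℕ))) (v i)
        map_add' := by
          intro c c'
          simp [add_smul, Finset.sum_add_distrib]
        map_smul' := by
          intro a c
          simp [Finset.smul_sum, smul_smul] }
    have hΦ_apply : ∀ c, Φ c = ∑ i : Fin d, ∑ j : Fin (q + 1), c i j •
        (x ^ (q - (j : ℕ))) (v i) := fun _ => rfl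
    have hΦ_single : ∀ (i₀ : Fin d) (j₀ : Fin (q + 1)),
        Φ (Pi.single i₀ (Pi.single j₀ 1)) = (x ^ (q - (j₀ : ℕ))) (v i₀) := by
      intro i₀ j₀
      rw [hΦ_apply]
      rw [Finset.sum_eq_single i₀]
      · rw [Finset.sum_eq_single j₀]
        · simp
        · intro j _ hj
          simp [Pi.single_apply, hj]
        · simp
      · intro i _ hi
        simp [Pi.single_apply, hi]
      · simp
    -- spans
    set S : ℕ → Submodule k V := fun t =>
      Submodule.span k (Set.range fun im : Fin d × ℕ => (x ^ (t + im.2)) (v im.1)) with hS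
    have hS_map : ∀ t, Submodule.map x (S t) = S (t + 1) := by
      intro t
      rw [hS]
      rw [Submodule.map_span, ← Set.range_comp]
      have hfun : (⇑x ∘ fun im : Fin d × ℕ => (x ^ (t + im.2)) (v im.1))
          = fun im : Fin d × ℕ => (x ^ (t + 1 + im.2)) (v im.1) := by
        funext im
        show x ((x ^ (t + im.2)) (v im.1)) = _
        rw [← Module.End.mul_apply, ← pow_succ',
          show t + im.2 + 1 = t + 1 + im.2 from by omega]
      rw [hfun]
    have hker_le : ∀ t, t ≤ q → LinearMap.ker x ≤ S t := by
      intro t ht w hw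
      have hrepr := b.sum_repr ⟨w, hw⟩
      have : w = ∑ i, b.repr ⟨w, hw⟩ i • (b i : V) := by
        have := congrArg (Submodule.subtype (LinearMap.ker x)) hrepr
        simp only [map_sum, map_smul] at this
        exact this.symm
      rw [this]
      apply Submodule.sum_mem
      intro i _
      apply Submodule.smul_mem
      apply Submodule.subset_span
      refine ⟨(i, q - t), ?_⟩
      show (x ^ (t + (q - t))) (v i) = (b i : V)
      rw [show t + (q - t) = q by omega, hv]
    have hsurj_aux : ∀ j, j ≤ q + 1 → LinearMap.range (x ^ (q + 1 - j)) ≤ S (q + 1 - j) := by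
      intro j
      induction j with
      | zero =>
        intro _
        simp only [Nat.sub_zero, hx, LinearMap.range_zero]
        exact bot_le
      | succ j ih =>
        intro hj
        rintro _ ⟨w, rfl⟩
        have h1 : (x ^ (q + 1 - j)) w ∈ S (q + 1 - j) := ih (by omega) ⟨w, rfl⟩
        have hsplit : q + 1 - j = (q + 1 - (j + 1)) + 1 := by omega
        rw [hsplit, ← hS_map] at h1
        obtain ⟨s, hs, hxs⟩ := h1
        have hdiff : (x ^ (q + 1 - (j + 1))) w - s ∈ LinearMap.ker x := by
          rw [LinearMap.mem_ker, map_sub, hxs, ← Module.End.mul_apply, ← pow_succ', ← hsplit,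
            sub_self]
        have h2 : (x ^ (q + 1 - (j + 1))) w - s ∈ S (q + 1 - (j + 1)) :=
          hker_le _ (by omega) hdiff
        have h3 : s ∈ S (q + 1 - (j + 1)) := hs
        simpa using add_mem h2 h3
    have hS0 : S 0 ≤ LinearMap.range Φ := by
      rw [hS]
      rw [Submodule.span_le]
      rintro _ ⟨⟨i, m⟩, rfl⟩
      show (x ^ (0 + m)) (v i) ∈ LinearMap.range Φ
      rcases lt_or_ge m (q + 1) with hm | hm
      · refine ⟨Pi.single i (Pi.single ⟨q - m, by omega⟩ 1), ?_⟩
        rw [hΦ_single]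
        show (x ^ (q - (q - m))) (v i) = (x ^ (0 + m)) (v i)
        rw [show q - (q - m) = 0 + m from by omega]
      · have : (x ^ (0 + m)) (v i) = 0 := by
          have : x ^ (0 + m) = x ^ (q + 1) * x ^ (m - (q + 1)) := by
            rw [← pow_add]; congr 1; omega
          rw [this, hx, zero_mul]; rfl
        rw [this]
        exact zero_mem _
    have hΦsurj : Function.Surjective Φ := by
      rw [← LinearMap.range_eq_top]
      rw [eq_top_iff]
      intro w _
      have h0 : w ∈ LinearMap.range (x ^ (q + 1 - (q + 1))) := by
        simp only [Nat.sub_self, pow_zero]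
        exact ⟨w, rfl⟩
      exact hS0 (by simpa using hsurj_aux (q + 1) le_rfl h0)
    have hΦinj : Function.Injective Φ := by
      rw [← LinearMap.ker_eq_bot]
      have hdom : Module.finrank k (Fin d → Fin (q + 1) → k) = d * (q + 1) := by
        have h1 : Module.finrank k (Fin (q + 1) → k) = q + 1 := by
          simp [Module.finrank_pi]
        rw [Module.finrank_pi_fintype]
        simp [h1, Finset.sum_const, Finset.card_fin, smul_eq_mul]
      have hrk := LinearMap.finrank_range_add_finrank_ker Φ
      have hrange : LinearMap.range Φ = ⊤ := LinearMap.range_eq_top.mpr hΦsurj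
      rw [hrange, finrank_top, hn, hdom, mul_comm d (q + 1)] at hrk
      have : Module.finrank k (LinearMap.ker Φ) = 0 := by omega
      exact Submodule.finrank_eq_zero.mp this
    let eΦ : (Fin d → Fin (q + 1) → k) ≃ₗ[k] V :=
      LinearEquiv.ofBijective Φ ⟨hΦinj, hΦsurj⟩
    -- intertwining
    have hΦshift : ∀ c, Φ (shiftOp k (q + 1) d c) = x (Φ c) := by
      intro c
      rw [hΦ_apply, hΦ_apply, map_sum]
      apply Finset.sum_congr rfl
      intro i _
      rw [map_sum]
      rw [Fin.sum_univ_castSucc, Fin.sum_univ_succ]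
      have hlast : shiftOp k (q + 1) d c i (Fin.last q) • (x ^ (q - (Fin.last q : ℕ))) (v i)
          = 0 := by
        rw [shiftOp_apply, dif_neg (by simp)]
        rw [zero_smul]
      have hfirst : x (c i 0 • (x ^ (q - ((0 : Fin (q + 1)) : ℕ))) (v i)) = 0 := by
        rw [map_smul, ← Module.End.mul_apply, ← pow_succ']
        have : (((0 : Fin (q + 1)) : ℕ)) = 0 := rfl
        rw [this, Nat.sub_zero, hx]
        simp
      rw [hlast, add_zero, hfirst, zero_add]
      apply Finset.sum_congr rfl
      intro j _
      rw [shiftOp_apply, dif_pos (by simp)]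
      rw [map_smul, ← Module.End.mul_apply, ← pow_succ']
      have h1 : (⟨((j.castSucc : ℕ)) + 1, by simp⟩ : Fin (q + 1)) = j.succ := by
        apply Fin.ext; simp
      rw [h1]
      have hjq : (j : ℕ) < q := j.is_lt
      have h2 : q - ((Fin.castSucc j : Fin (q + 1)) : ℕ)
          = q - ((Fin.succ j : Fin (q + 1)) : ℕ) + 1 := by
        simp only [Fin.coe_castSucc, Fin.val_succ]
        omega
      rw [h2]
    refine ⟨d, eΦ.symm, ?_⟩
    intro w
    apply eΦ.injective
    rw [eΦ.apply_symm_apply]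
    show x w = eΦ (shiftOp k (q + 1) d (eΦ.symm w))
    show x w = Φ (shiftOp k (q + 1) d (eΦ.symm w))
    rw [hΦshift]
    congr 1
    exact (eΦ.apply_symm_apply w).symm
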